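/- If G is a finite simple graph on n vertices such that all induced subgraphs on n − 3 vertices are pairwise non-isomorphic, then every induced subgraph of G on n − 2 vertices is an anchor (unique) and is asymmetric (has trivial automorphism group). -/

import Mathlib

/-- `A` is the vertex set of an anchor of `G`: a nonempty proper vertex subset such
that `A` is the unique vertex subset of `G` inducing a subgraph isomorphic to `G[A]`. -/
def IsAnchor {V : Type*} (G : SimpleGraph V) (A : Set V) : Prop :=
  A.Nonempty ∧ A ≠ Set.univ ∧
    ∀ S : Set V, Nonempty (G.induce S ≃g G.induce A) → S = A

/-- Restricting an isomorphism of induced subgraphs by deleting a vertex. -/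
def restrictIso {V : Type*} (G : SimpleGraph V) (S T : Set V)
    (φ : G.induce S ≃g G.induce T) (s : V) (hs : s ∈ S) :
    G.induce (S \ {s}) ≃g G.induce (T \ {(φ ⟨s, hs⟩ : V)}) where
  toFun x := ⟨(φ ⟨x, x.2.1⟩ : V), (φ ⟨x, x.2.1⟩).2, by
    intro hmem
    apply x.2.2
    have : φ ⟨(x : V), x.2.1⟩ = φ ⟨s, hs⟩ := Subtype.ext hmem
    have := φ.injective this
    exact Set.mem_singleton_iff.mpr (congrArg Subtype.val this)⟩
  invFun y := ⟨(φ.symm ⟨y, y.2.1⟩ : V), (φ.symm ⟨y, y.2.1⟩).2, by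
    intro hmem
    apply y.2.2
    have hx : φ.symm ⟨(y : V), y.2.1⟩ = ⟨s, hs⟩ := Subtype.ext hmem
    have h2 : φ (φ.symm ⟨(y : V), y.2.1⟩) = φ ⟨s, hs⟩ := congrArg _ hx
    rw [RelIso.apply_symm_apply] at h2
    exact Set.mem_singleton_iff.mpr (congrArg Subtype.val h2)⟩
  left_inv x := by
    apply Subtype.ext
    simp
  right_inv y := by
    apply Subtype.ext
    simp
  map_rel_iff' {a b} := by
    simpa using φ.map_rel_iff (a := ⟨a, a.2.1⟩) (b := ⟨b, b.2.1⟩)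

lemma ncard_eq_of_iso {V : Type*} [Fintype V] (G : SimpleGraph V) (S T : Set V)
    (φ : G.induce S ≃g G.induce T) : S.ncard = T.ncard := by
  rw [← Nat.card_coe_set_eq, ← Nat.card_coe_set_eq]
  exact Nat.card_congr φ.toEquiv

/-- If all `(n−3)`-vertex induced subgraphs of an `n`-vertex graph `G` (with `n ≥ 4`)
are pairwise non-isomorphic, then every `(n−2)`-vertex induced subgraph of `G` is an
anchor and is asymmetric (its only automorphism is the identity). -/
theorem anchor_and_asymmetric_of_distinct_n_sub_three {V : Type*} [Fintype V]
    (G : SimpleGraph V) (hn : 4 ≤ Fintype.card V)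
    (h : ∀ S T : Set V, S.ncard = Fintype.card V - 3 → T.ncard = Fintype.card V - 3 →
      S ≠ T → IsEmpty (G.induce S ≃g G.induce T)) :
    ∀ A : Set V, A.ncard = Fintype.card V - 2 →
      IsAnchor G A ∧ ∀ φ : G.induce A ≃g G.induce A, ∀ x : ↥A, φ x = x := by
  intro A hA
  have hfin : ∀ B : Set V, B.Finite := fun B => B.toFinite
  -- a key step: from an iso and a chosen vertex, the (n-3)-sets must coincide
  have key : ∀ (S T : Set V) (φ : G.induce S ≃g G.induce T) (s : V) (hs : s ∈ S),
      S.ncard = Fintype.card V - 2 → T.ncard = Fintype.card V - 2 →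
      S \ {s} = T \ {(φ ⟨s, hs⟩ : V)} := by
    intro S T φ s hs hS hT
    by_contra hne
    have c1 : (S \ {s}).ncard = Fintype.card V - 3 := by
      rw [Set.ncard_diff_singleton_of_mem hs, hS]; omega
    have c2 : (T \ {(φ ⟨s, hs⟩ : V)}).ncard = Fintype.card V - 3 := by
      rw [Set.ncard_diff_singleton_of_mem (φ ⟨s, hs⟩).2, hT]; omega
    exact (h _ _ c1 c2 hne).false (restrictIso G S T φ s hs)
  -- asymmetry
  have asym : ∀ φ : G.induce A ≃g G.induce A, ∀ x : ↥A, φ x = x := by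
    intro φ x
    by_contra hx
    have hne : A \ {(x : V)} ≠ A \ {(φ ⟨x, x.2⟩ : V)} := by
      intro heq
      apply hx
      have hxmem : (x : V) ∉ A \ {(φ ⟨x, x.2⟩ : V)} := by
        rw [← heq]; simp
      have : (x : V) = (φ ⟨x, x.2⟩ : V) := by
        by_contra hcc
        exact hxmem ⟨x.2, hcc⟩
      exact (Subtype.ext this.symm)
    have := key A A φ x x.2 hA hA
    have : φ ⟨x, x.2⟩ = φ x := by congr
    exact hne (by rw [← this]; exact key A A φ x x.2 hA hA)
  refine ⟨⟨?_, ?_, ?_⟩, asym⟩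
  · exact Set.nonempty_of_ncard_ne_zero (by omega)
  · intro hAu
    have : A.ncard = Fintype.card V := by rw [hAu, Set.ncard_univ, Nat.card_eq_fintype_card]
    omega
  · intro S ⟨φ⟩
    have hS : S.ncard = Fintype.card V - 2 := by rw [ncard_eq_of_iso G S A φ, hA]
    by_contra hSA
    -- find s ∈ S \ A
    have hSsub : ¬ S ⊆ A := by
      intro hsub
      exact hSA (Set.eq_of_subset_of_ncard_le hsub (by omega) (hfin A))
    obtain ⟨s, hsS, hsA⟩ := Set.not_subset.mp hSsub
    have h1 := key S A φ s hsS
    have e1 : S \ {s} = A \ {(φ ⟨s, hsS⟩ : V)} := key S A φ s hsS hS hA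
    -- find t ∈ S, t ≠ s
    have : 1 < S.ncard := by omega
    obtain ⟨t, htS, hts⟩ : ∃ t ∈ S, t ≠ s := by
      rcases Set.one_lt_ncard_iff (hfin S) |>.mp this with ⟨a, b, ha, hb, hab⟩
      by_cases has : a = s
      · exact ⟨b, hb, by rw [← has]; exact fun hh => hab hh.symm⟩
      · exact ⟨a, ha, has⟩
    have e2 : S \ {t} = A \ {(φ ⟨t, htS⟩ : V)} := key S A φ t htS hS hA
    have : s ∈ S \ {t} := ⟨hsS, fun hh => hts (Set.mem_singleton_iff.mp hh).symm⟩
    rw [e2] at this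
    exact hsA this.1
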